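/- Let F : ℝ^d → ℝ^d and G : ℝ^d → L(ℝ^r,ℝ^d) be Lipschitz with G bounded, and fix q ∈ ℝ^d and γ > 0. Let (u_n) ⊂ L²([0,T];ℝ^r) with ‖u_n‖²_{L²} ≤ 2γ converge weakly to u, and let g_n, g solve ġ_n = F(g_n) + G(g_n)u_n, g_n(0) = q, and ġ = F(g) + G(g)u, g(0) = q. Then g_n → g in C([0,T];ℝ^d). -/

import Mathlib

open MeasureTheory intervalIntegral Filter Topology
open scoped RealInnerProductSpace

lemma ii_sub {E : Type*} [NormedAddCommGroup E] {T : ℝ} {f : ℝ → E}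
    (hf : IntegrableOn f (Set.Icc 0 T)) {s t : ℝ}
    (hs : s ∈ Set.Icc (0:ℝ) T) (ht : t ∈ Set.Icc (0:ℝ) T) :
    IntervalIntegrable f MeasureTheory.volume s t := by
  rw [intervalIntegrable_iff]
  exact hf.mono_set (fun x hx => ⟨(le_min hs.1 ht.1).trans hx.1.le, hx.2.trans (max_le hs.2 ht.2)⟩)

lemma l2_slice {T C lam : ℝ} (hT : 0 < T) {w : ℝ → ℝ}
    (hw1 : IntegrableOn w (Set.Icc 0 T))
    (hw2 : IntegrableOn (fun x => w x ^ 2) (Set.Icc 0 T))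
    (hC : (∫ x in (0:ℝ)..T, w x ^ 2) ≤ C) (hlam : 0 < lam)
    {s t : ℝ} (hs : s ∈ Set.Icc (0:ℝ) T) (ht : t ∈ Set.Icc (0:ℝ) T) (hst : s ≤ t) :
    (∫ x in s..t, w x) ≤ lam * (t - s) / 2 + C / (2 * lam) := by
  have h0T : (0:ℝ) ∈ Set.Icc (0:ℝ) T := Set.left_mem_Icc.2 hT.le
  have hTT : T ∈ Set.Icc (0:ℝ) T := Set.right_mem_Icc.2 hT.le
  have i0s : IntervalIntegrable (fun x => w x ^ 2) volume 0 s := ii_sub hw2 h0T hs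
  have ist : IntervalIntegrable (fun x => w x ^ 2) volume s t := ii_sub hw2 hs ht
  have itT : IntervalIntegrable (fun x => w x ^ 2) volume t T := ii_sub hw2 ht hTT
  have hsplit : (∫ x in (0:ℝ)..T, w x ^ 2)
      = (∫ x in (0:ℝ)..s, w x ^ 2) + (∫ x in s..t, w x ^ 2) + (∫ x in t..T, w x ^ 2) := by
    rw [integral_add_adjacent_intervals i0s ist,
      integral_add_adjacent_intervals (i0s.trans ist) itT]
  have h1 : 0 ≤ ∫ x in (0:ℝ)..s, w x ^ 2 :=
    intervalIntegral.integral_nonneg hs.1 (fun x _ => sq_nonneg _)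
  have h2 : 0 ≤ ∫ x in t..T, w x ^ 2 :=
    intervalIntegral.integral_nonneg ht.2 (fun x _ => sq_nonneg _)
  have hsq : (∫ x in s..t, w x ^ 2) ≤ C := by linarith [hsplit ▸ hC]
  have hmono : (∫ x in s..t, w x) ≤ ∫ x in s..t, (lam / 2 + w x ^ 2 * (2 * lam)⁻¹) := by
    apply intervalIntegral.integral_mono_on hst (ii_sub hw1 hs ht)
      (intervalIntegrable_const.add (ist.mul_const _))
    intro x _
    have h := sq_nonneg (w x - lam)
    have h2l : 0 < 2 * lam := by linarith
    have he : lam / 2 + w x ^ 2 * (2 * lam)⁻¹ - w x = (w x - lam)^2 * (2*lam)⁻¹ := by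
      field_simp; ring
    nlinarith [mul_nonneg h (inv_nonneg.2 h2l.le)]
  rw [intervalIntegral.integral_add intervalIntegrable_const (ist.mul_const _),
    intervalIntegral.integral_const, intervalIntegral.integral_mul_const] at hmono
  have h2l : 0 < 2 * lam := by linarith
  calc (∫ x in s..t, w x) ≤ (t - s) • (lam / 2) + (∫ x in s..t, w x ^ 2) * (2*lam)⁻¹ := hmono
    _ ≤ (t - s) * (lam / 2) + C * (2*lam)⁻¹ := by
        rw [smul_eq_mul]
        have : (∫ x in s..t, w x ^ 2) * (2*lam)⁻¹ ≤ C * (2*lam)⁻¹ :=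
          mul_le_mul_of_nonneg_right hsq (inv_nonneg.2 h2l.le)
        linarith
    _ = lam * (t - s) / 2 + C / (2 * lam) := by rw [div_eq_mul_inv C]; ring


lemma gronwall_discrete {T : ℝ} (hT : 0 < T) {a φ : ℝ → ℝ}
    (ha_int : IntegrableOn a (Set.Icc 0 T))
    (ha_nn : ∀ s, 0 ≤ a s)
    (hφ_int : IntegrableOn (fun s => a s * φ s) (Set.Icc 0 T))
    (hφ_nn : ∀ s, 0 ≤ φ s)
    {ε : ℝ} (hε : 0 ≤ ε)
    (key : ∀ t ∈ Set.Icc (0:ℝ) T, φ t ≤ ε + ∫ s in (0:ℝ)..t, a s * φ s)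
    {K : ℕ} (hK : 0 < K)
    (hsmall : ∀ k : ℕ, k < K →
      (∫ s in ((k : ℝ) * (T/K))..(((k : ℝ)+1) * (T/K)), a s) ≤ 1/2) :
    ∀ t ∈ Set.Icc (0:ℝ) T, φ t ≤ 2^K * ε := by
  set δ := T / K with hδdef
  have hδ : 0 < δ := div_pos hT (by exact_mod_cast hK)
  -- interval integrability on subintervals of [0,T]
  have hii : ∀ {f : ℝ → ℝ}, IntegrableOn f (Set.Icc 0 T) →
      ∀ {s t : ℝ}, s ∈ Set.Icc (0:ℝ) T → t ∈ Set.Icc (0:ℝ) T →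
      IntervalIntegrable f volume s t := by
    intro f hf s t hs ht
    rw [intervalIntegrable_iff]
    exact hf.mono_set (fun x hx => ⟨(le_min hs.1 ht.1).trans hx.1.le, hx.2.trans (max_le hs.2 ht.2)⟩)
  set ρ : ℝ → ℝ := fun t => ∫ s in (0:ℝ)..t, a s * φ s with hρdef
  have hρ_mono : ∀ {s t : ℝ}, s ∈ Set.Icc (0:ℝ) T → t ∈ Set.Icc (0:ℝ) T → s ≤ t →
      ρ s ≤ ρ t := by
    intro s t hs ht hst
    have h1 : IntervalIntegrable (fun s => a s * φ s) volume 0 s :=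
      hii hφ_int (Set.left_mem_Icc.2 hT.le) hs
    have h2 : IntervalIntegrable (fun s => a s * φ s) volume s t := hii hφ_int hs ht
    have : ρ t = ρ s + ∫ x in s..t, a x * φ x := by
      rw [hρdef]; exact (integral_add_adjacent_intervals h1 h2).symm
    rw [this]
    have : 0 ≤ ∫ x in s..t, a x * φ x :=
      intervalIntegral.integral_nonneg hst (fun x _ => mul_nonneg (ha_nn x) (hφ_nn x))
    linarith
  have hρ0 : ρ 0 = 0 := by simp [hρdef]
  have hρnn : ∀ t ∈ Set.Icc (0:ℝ) T, 0 ≤ ρ t := fun t ht => hρ0 ▸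
    hρ_mono (Set.left_mem_Icc.2 hT.le) ht ht.1
  -- induction
  have hmem : ∀ k : ℕ, k ≤ K → (k : ℝ) * δ ∈ Set.Icc (0:ℝ) T := by
    intro k hk
    constructor
    · positivity
    · have : (k : ℝ) ≤ K := by exact_mod_cast hk
      calc (k:ℝ) * δ ≤ K * δ := by nlinarith
        _ = T := by rw [hδdef]; field_simp [(Nat.cast_pos.mpr hK).ne']
  have hind : ∀ k : ℕ, k ≤ K → ρ ((k:ℝ) * δ) ≤ (2^k - 1) * ε := by
    intro k
    induction k with
    | zero => intro _; simp [hρ0]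
    | succ k ih =>
      intro hk1
      have hk : k ≤ K := Nat.le_of_succ_le hk1
      have hkK : k < K := hk1
      have ht0 := hmem k hk
      have ht1 := hmem (k+1) hk1
      have hle : (k:ℝ) * δ ≤ ((k:ℝ)+1) * δ := by nlinarith
      have h1 : IntervalIntegrable (fun s => a s * φ s) volume 0 ((k:ℝ)*δ) :=
        hii hφ_int (Set.left_mem_Icc.2 hT.le) ht0
      have hcast : ((k+1 : ℕ) : ℝ) = (k:ℝ) + 1 := by push_cast; ring
      have ht1' : ((k:ℝ)+1) * δ ∈ Set.Icc (0:ℝ) T := by rwa [hcast] at ht1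
      have h2 : IntervalIntegrable (fun s => a s * φ s) volume ((k:ℝ)*δ) (((k:ℝ)+1)*δ) :=
        hii hφ_int ht0 ht1'
      have hsplit : ρ (((k:ℝ)+1) * δ) = ρ ((k:ℝ)*δ) + ∫ s in ((k:ℝ)*δ)..(((k:ℝ)+1)*δ), a s * φ s := by
      -- prove
        rw [hρdef]; exact (integral_add_adjacent_intervals h1 h2).symm
      have hρ1nn : 0 ≤ ρ (((k:ℝ)+1) * δ) := hρnn _ ht1'
      -- bound middle integral
      have hbd : (∫ s in ((k:ℝ)*δ)..(((k:ℝ)+1)*δ), a s * φ s)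
          ≤ (ε + ρ (((k:ℝ)+1)*δ)) * (1/2) := by
        have hmono : (∫ s in ((k:ℝ)*δ)..(((k:ℝ)+1)*δ), a s * φ s)
            ≤ ∫ s in ((k:ℝ)*δ)..(((k:ℝ)+1)*δ), a s * (ε + ρ (((k:ℝ)+1)*δ)) := by
          apply intervalIntegral.integral_mono_on hle h2
          · exact (hii ha_int ht0 ht1').mul_const _
          · intro s hs
            have hsT : s ∈ Set.Icc (0:ℝ) T :=
              ⟨le_trans ht0.1 hs.1, le_trans hs.2 ht1'.2⟩
            have hφs : φ s ≤ ε + ρ s := key s hsT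
            have : ρ s ≤ ρ (((k:ℝ)+1)*δ) := hρ_mono hsT ht1' hs.2
            have h3 : φ s ≤ ε + ρ (((k:ℝ)+1)*δ) := by linarith
            exact mul_le_mul_of_nonneg_left h3 (ha_nn s)
        rw [intervalIntegral.integral_mul_const] at hmono
        calc (∫ s in ((k:ℝ)*δ)..(((k:ℝ)+1)*δ), a s * φ s)
            ≤ (∫ s in ((k:ℝ)*δ)..(((k:ℝ)+1)*δ), a s) * (ε + ρ (((k:ℝ)+1)*δ)) := hmono
          _ ≤ (1/2) * (ε + ρ (((k:ℝ)+1)*δ)) := by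
              apply mul_le_mul_of_nonneg_right _ (by linarith)
              exact hsmall k hkK
          _ = (ε + ρ (((k:ℝ)+1)*δ)) * (1/2) := by ring
      have ihk := ih hk
      have h2k : (1:ℝ) ≤ 2^k := one_le_pow₀ (by norm_num)
      have : ρ (((k:ℝ)+1)*δ) ≤ 2 * ρ ((k:ℝ)*δ) + ε := by
        rw [hsplit] at hρ1nn ⊢ <;> nlinarith [hbd, hsplit]
      have goal : ρ (((k:ℝ)+1)*δ) ≤ (2^(k+1) - 1) * ε := by
        have : ρ (((k:ℝ)+1)*δ) ≤ 2 * ((2^k - 1)*ε) + ε := by linarith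
        calc ρ (((k:ℝ)+1)*δ) ≤ 2 * ((2^k - 1)*ε) + ε := this
          _ = (2^(k+1) - 1) * ε := by ring
      rwa [hcast]
  intro t ht
  have hφt := key t ht
  have hρt : ρ t ≤ ρ ((K:ℝ) * δ) := by
    apply hρ_mono ht (hmem K le_rfl)
    have : (K:ℝ) * δ = T := by rw [hδdef]; field_simp [(Nat.cast_pos.mpr hK).ne']
    rw [this]; exact ht.2
  have := hind K le_rfl
  have h2K : (1:ℝ) ≤ 2^K := one_le_pow₀ (by norm_num)
  have : φ t ≤ ε + (2^K - 1) * ε := by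
    have := hφt
    change φ t ≤ ε + ρ t at this
    linarith
  linarith [this]


lemma unif_small {E : Type*} [NormedAddCommGroup E] {T : ℝ} (hT : 0 < T)
    (h : ℕ → ℝ → E)
    (hpt : ∀ t ∈ Set.Icc (0:ℝ) T, Tendsto (fun n => h n t) atTop (𝓝 0))
    (hec : ∀ ε : ℝ, 0 < ε → ∃ δ : ℝ, 0 < δ ∧ ∀ n, ∀ s ∈ Set.Icc (0:ℝ) T, ∀ t ∈ Set.Icc (0:ℝ) T,
      |t - s| ≤ δ → ‖h n t - h n s‖ ≤ ε)
    {ε : ℝ} (hε : 0 < ε) :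
    ∀ᶠ n in atTop, ∀ t ∈ Set.Icc (0:ℝ) T, ‖h n t‖ < ε := by
  obtain ⟨δ, hδ, hδ2⟩ := hec (ε/3) (by linarith)
  set N : ℕ := Nat.floor (T / δ) with hN
  set p : ℕ → ℝ := fun k => min ((k:ℝ) * δ) T with hp
  have hpmem : ∀ k, p k ∈ Set.Icc (0:ℝ) T := by
    intro k
    constructor
    · exact le_min (by positivity) hT.le
    · exact min_le_right _ _
  have hevk : ∀ᶠ n in atTop, ∀ k ∈ Finset.range (N+1), ‖h n (p k)‖ < ε/3 := by
    rw [Filter.eventually_all_finset]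
    intro k _
    have := hpt (p k) (hpmem k)
    have := (this.norm.eventually (eventually_lt_nhds (show ‖(0:E)‖ < ε/3 by simp; linarith)))
    simpa using this
  filter_upwards [hevk] with n hn
  intro t ht
  set k : ℕ := Nat.floor (t / δ) with hk
  have hkN : k ∈ Finset.range (N+1) := by
    rw [Finset.mem_range]
    have : k ≤ N := Nat.floor_le_floor (by gcongr; exact ht.2)
    omega
  have hkd : (k:ℝ) * δ ≤ t := by
    rw [hk]
    have := Nat.floor_le (show 0 ≤ t / δ from div_nonneg ht.1 hδ.le)
    calc (Nat.floor (t/δ) : ℝ) * δ ≤ (t/δ) * δ := by nlinarith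
      _ = t := by field_simp
  have hpk : p k = (k:ℝ) * δ := min_eq_left (hkd.trans ht.2)
  have hclose : |t - p k| ≤ δ := by
    rw [hpk, abs_of_nonneg (by linarith)]
    have := Nat.lt_floor_add_one (t / δ)
    rw [← hk] at this
    have : t < ((k:ℝ)+1) * δ := by
      calc t = (t/δ) * δ := by field_simp
        _ < ((k:ℝ)+1) * δ := by nlinarith
    linarith
  have h1 := hδ2 n (p k) (hpmem k) t ht hclose
  have h2 := hn k hkN
  have h3 := norm_sub_norm_le (h n t) (h n (p k))
  linarith
set_option maxHeartbeats 1000000 in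
/-- Continuity of the control-to-solution map from the weak topology of the `L²`-ball to
`C([0,T];ℝ^d)`: if `u_n ⇀ u` weakly in `L²` with `‖u_n‖² ≤ 2γ`, then the corresponding
controlled solutions converge uniformly, `g_n → g` in `C([0,T];ℝ^d)`. -/
theorem stmt10 {d r : ℕ} (T γ : ℝ) (hT : 0 < T) (hγ : 0 < γ)
    (F : EuclideanSpace ℝ (Fin d) → EuclideanSpace ℝ (Fin d))
    (G : EuclideanSpace ℝ (Fin d) → EuclideanSpace ℝ (Fin r) →L[ℝ] EuclideanSpace ℝ (Fin d))
    (LF LG : NNReal) (hF : LipschitzWith LF F) (hG : LipschitzWith LG G)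
    (M : ℝ) (hGb : ∀ x, ‖G x‖ ≤ M)
    (q : EuclideanSpace ℝ (Fin d))
    (u : ℕ → ℝ → EuclideanSpace ℝ (Fin r)) (uLim : ℝ → EuclideanSpace ℝ (Fin r))
    (hun : ∀ n, MemLp (u n) 2 (volume.restrict (Set.Icc 0 T)))
    (huLim : MemLp uLim 2 (volume.restrict (Set.Icc 0 T)))
    (hbn : ∀ n, (∫ t in (0 : ℝ)..T, ‖u n t‖ ^ 2) ≤ 2 * γ)
    (hweak : ∀ v : ℝ → EuclideanSpace ℝ (Fin r),
      MemLp v 2 (volume.restrict (Set.Icc 0 T)) →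
      Tendsto (fun n => ∫ s in (0 : ℝ)..T, ⟪u n s, v s⟫) atTop
        (𝓝 (∫ s in (0 : ℝ)..T, ⟪uLim s, v s⟫)))
    (g : ℕ → ℝ → EuclideanSpace ℝ (Fin d)) (gLim : ℝ → EuclideanSpace ℝ (Fin d))
    (hgc : ∀ n, ContinuousOn (g n) (Set.Icc 0 T))
    (hgLimc : ContinuousOn gLim (Set.Icc 0 T))
    (hg : ∀ n, ∀ t ∈ Set.Icc (0 : ℝ) T,
      g n t = q + ∫ s in (0 : ℝ)..t, (F (g n s) + G (g n s) (u n s)))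
    (hgLim : ∀ t ∈ Set.Icc (0 : ℝ) T,
      gLim t = q + ∫ s in (0 : ℝ)..t, (F (gLim s) + G (gLim s) (uLim s))) :
    TendstoUniformlyOn (fun n t => g n t) gLim atTop (Set.Icc 0 T) := by
  classical
  have hM0 : 0 ≤ M := le_trans (norm_nonneg _) (hGb q)
  set m : ℝ := M + 1 with hm_def
  have hm : 0 < m := by simp only [hm_def]; linarith
  have hGb' : ∀ x, ‖G x‖ ≤ m := fun x => (hGb x).trans (by simp [hm_def])
  have h0T : (0:ℝ) ∈ Set.Icc (0:ℝ) T := Set.left_mem_Icc.2 hT.le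
  have hTT : T ∈ Set.Icc (0:ℝ) T := Set.right_mem_Icc.2 hT.le
  haveI hfin : IsFiniteMeasure (volume.restrict (Set.Icc (0:ℝ) T)) := by
    constructor
    rw [Measure.restrict_apply_univ]
    exact measure_Icc_lt_top
  -- integrability of the controls
  have hu1 : ∀ n, IntegrableOn (u n) (Set.Icc 0 T) := fun n =>
    memLp_one_iff_integrable.mp ((hun n).mono_exponent (by norm_num))
  have huL1 : IntegrableOn uLim (Set.Icc 0 T) :=
    memLp_one_iff_integrable.mp (huLim.mono_exponent (by norm_num))
  have hunorm : ∀ n, IntegrableOn (fun s => ‖u n s‖) (Set.Icc 0 T) := fun n => (hu1 n).norm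
  have huLnorm : IntegrableOn (fun s => ‖uLim s‖) (Set.Icc 0 T) := huL1.norm
  have husq : ∀ n, IntegrableOn (fun s => ‖u n s‖ ^ 2) (Set.Icc 0 T) := fun n =>
    (hun n).norm.integrable_sq
  have huLsq : IntegrableOn (fun s => ‖uLim s‖ ^ 2) (Set.Icc 0 T) := huLim.norm.integrable_sq
  set B : ℝ := ∫ s in (0:ℝ)..T, ‖uLim s‖ ^ 2 with hB_def
  have hB : 0 ≤ B := intervalIntegral.integral_nonneg hT.le (fun x _ => sq_nonneg _)
  -- continuity facts
  have hGgn : ∀ n, ContinuousOn (fun s => G (g n s)) (Set.Icc 0 T) := fun n =>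
    hG.continuous.comp_continuousOn (hgc n)
  have hGgL : ContinuousOn (fun s => G (gLim s)) (Set.Icc 0 T) :=
    hG.continuous.comp_continuousOn hgLimc
  -- integrability of applied operators
  have happ : ∀ (A : ℝ → (EuclideanSpace ℝ (Fin r) →L[ℝ] EuclideanSpace ℝ (Fin d)))
      (w : ℝ → EuclideanSpace ℝ (Fin r)), ContinuousOn A (Set.Icc 0 T) →
      IntegrableOn w (Set.Icc 0 T) → (∀ s, ‖A s‖ ≤ m) →
      IntegrableOn (fun s => A s (w s)) (Set.Icc 0 T) := by
    intro A w hA hw hAb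
    have hmeas : AEStronglyMeasurable (fun s => A s (w s))
        (volume.restrict (Set.Icc (0:ℝ) T)) := by
      have h1 : AEStronglyMeasurable A (volume.restrict (Set.Icc (0:ℝ) T)) :=
        hA.aestronglyMeasurable measurableSet_Icc
      exact isBoundedBilinearMap_apply.continuous.comp_aestronglyMeasurable
        (h1.prodMk hw.aestronglyMeasurable)
    apply Integrable.mono (hw.norm.const_mul m) hmeas
    filter_upwards with s
    have h1 := (A s).le_opNorm (w s)
    have h2 : ‖A s (w s)‖ ≤ m * ‖w s‖ :=
      le_trans h1 (mul_le_mul_of_nonneg_right (hAb s) (norm_nonneg _))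
    calc ‖A s (w s)‖ ≤ m * ‖w s‖ := h2
      _ ≤ ‖m * ‖w s‖‖ := le_abs_self _
  have hint1 : ∀ n, IntegrableOn (fun s => F (g n s)) (Set.Icc 0 T) := fun n =>
    (hF.continuous.comp_continuousOn (hgc n)).integrableOn_Icc
  have hintL1 : IntegrableOn (fun s => F (gLim s)) (Set.Icc 0 T) :=
    (hF.continuous.comp_continuousOn hgLimc).integrableOn_Icc
  have hint2 : ∀ n, IntegrableOn (fun s => G (g n s) (u n s)) (Set.Icc 0 T) := fun n =>
    happ _ _ (hGgn n) (hu1 n) (fun s => hGb' _)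
  have hint3 : ∀ n, IntegrableOn (fun s => G (gLim s) (u n s)) (Set.Icc 0 T) := fun n =>
    happ _ _ hGgL (hu1 n) (fun s => hGb' _)
  have hintL2 : IntegrableOn (fun s => G (gLim s) (uLim s)) (Set.Icc 0 T) :=
    happ _ _ hGgL huL1 (fun s => hGb' _)
  -- main objects
  set P : ℕ → ℝ → EuclideanSpace ℝ (Fin d) := fun n s =>
    F (g n s) - F (gLim s) + (G (g n s) (u n s) - G (gLim s) (u n s)) with hP_def
  set Q : ℕ → ℝ → EuclideanSpace ℝ (Fin d) := fun n s =>
    G (gLim s) (u n s) - G (gLim s) (uLim s) with hQ_def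
  set h : ℕ → ℝ → EuclideanSpace ℝ (Fin d) := fun n t => ∫ s in (0:ℝ)..t, Q n s with hh_def
  set φ : ℕ → ℝ → ℝ := fun n t => ‖g n t - gLim t‖ with hφ_def
  set a : ℕ → ℝ → ℝ := fun n s => (LF:ℝ) + (LG:ℝ) * ‖u n s‖ with ha_def
  have hPint : ∀ n, IntegrableOn (P n) (Set.Icc 0 T) := fun n =>
    ((hint1 n).sub hintL1).add ((hint2 n).sub (hint3 n))
  have hQint : ∀ n, IntegrableOn (Q n) (Set.Icc 0 T) := fun n => (hint3 n).sub hintL2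
  have ha_nn : ∀ n s, 0 ≤ a n s := fun n s =>
    add_nonneg LF.2 (mul_nonneg LG.2 (norm_nonneg _))
  have ha_int : ∀ n, IntegrableOn (a n) (Set.Icc 0 T) := fun n =>
    (integrableOn_const (C := (LF:ℝ)) measure_Icc_lt_top.ne).add ((hunorm n).const_mul LG)
  have hφ_cont : ∀ n, ContinuousOn (φ n) (Set.Icc 0 T) := fun n => ((hgc n).sub hgLimc).norm
  have haφ_int : ∀ n, IntegrableOn (fun s => a n s * φ n s) (Set.Icc 0 T) := fun n =>
    (ha_int n).mul_continuousOn (hφ_cont n) isCompact_Icc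
  -- the key identity
  have hkey : ∀ n, ∀ t ∈ Set.Icc (0:ℝ) T,
      g n t - gLim t = (∫ s in (0:ℝ)..t, P n s) + h n t := by
    intro n t ht
    have iA : IntervalIntegrable (fun s => F (g n s) + G (g n s) (u n s)) volume 0 t :=
      ii_sub ((hint1 n).add (hint2 n)) h0T ht
    have iB : IntervalIntegrable (fun s => F (gLim s) + G (gLim s) (uLim s)) volume 0 t :=
      ii_sub (hintL1.add hintL2) h0T ht
    have iP : IntervalIntegrable (P n) volume 0 t := ii_sub (hPint n) h0T ht
    have iQ : IntervalIntegrable (Q n) volume 0 t := ii_sub (hQint n) h0T ht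
    have e2 : ∀ s : ℝ, (F (g n s) + G (g n s) (u n s)) - (F (gLim s) + G (gLim s) (uLim s))
        = P n s + Q n s := by
      intro s
      simp only [hP_def, hQ_def]
      abel
    calc g n t - gLim t
        = (∫ s in (0:ℝ)..t, (F (g n s) + G (g n s) (u n s)))
          - (∫ s in (0:ℝ)..t, (F (gLim s) + G (gLim s) (uLim s))) := by
          rw [hg n t ht, hgLim t ht]; abel
      _ = ∫ s in (0:ℝ)..t, ((F (g n s) + G (g n s) (u n s))
            - (F (gLim s) + G (gLim s) (uLim s))) := (intervalIntegral.integral_sub iA iB).symm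
      _ = ∫ s in (0:ℝ)..t, (P n s + Q n s) := by simp only [e2]
      _ = (∫ s in (0:ℝ)..t, P n s) + h n t := intervalIntegral.integral_add iP iQ
  -- the key inequality
  have hineq : ∀ n, ∀ t ∈ Set.Icc (0:ℝ) T,
      φ n t ≤ (∫ s in (0:ℝ)..t, a n s * φ n s) + ‖h n t‖ := by
    intro n t ht
    have iP : IntervalIntegrable (P n) volume 0 t := ii_sub (hPint n) h0T ht
    have iaφ : IntervalIntegrable (fun s => a n s * φ n s) volume 0 t :=
      ii_sub (haφ_int n) h0T ht
    have hnorm : (∫ s in (0:ℝ)..t, ‖P n s‖) ≤ ∫ s in (0:ℝ)..t, a n s * φ n s := by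
      apply intervalIntegral.integral_mono_on ht.1 iP.norm iaφ
      intro s hs
      have hF1 : ‖F (g n s) - F (gLim s)‖ ≤ (LF:ℝ) * ‖g n s - gLim s‖ := by
        have := hF.dist_le_mul (g n s) (gLim s)
        simpa [dist_eq_norm] using this
      have hG1 : ‖G (g n s) (u n s) - G (gLim s) (u n s)‖
          ≤ ((LG:ℝ) * ‖g n s - gLim s‖) * ‖u n s‖ := by
        have e : G (g n s) (u n s) - G (gLim s) (u n s) = (G (g n s) - G (gLim s)) (u n s) := by
          simp
        rw [e]
        refine le_trans ((G (g n s) - G (gLim s)).le_opNorm (u n s)) ?_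
        apply mul_le_mul_of_nonneg_right _ (norm_nonneg _)
        have := hG.dist_le_mul (g n s) (gLim s)
        simpa [dist_eq_norm] using this
      calc ‖P n s‖ ≤ ‖F (g n s) - F (gLim s)‖ + ‖G (g n s) (u n s) - G (gLim s) (u n s)‖ :=
            norm_add_le _ _
        _ ≤ (LF:ℝ) * ‖g n s - gLim s‖ + ((LG:ℝ) * ‖g n s - gLim s‖) * ‖u n s‖ := by
            linarith
        _ = a n s * φ n s := by simp only [ha_def, hφ_def]; ring
    calc φ n t = ‖(∫ s in (0:ℝ)..t, P n s) + h n t‖ := by simp only [hφ_def]; rw [hkey n t ht]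
      _ ≤ ‖∫ s in (0:ℝ)..t, P n s‖ + ‖h n t‖ := norm_add_le _ _
      _ ≤ (∫ s in (0:ℝ)..t, ‖P n s‖) + ‖h n t‖ := by
          have := intervalIntegral.norm_integral_le_integral_norm (f := P n) (μ := volume) ht.1
          linarith
      _ ≤ (∫ s in (0:ℝ)..t, a n s * φ n s) + ‖h n t‖ := by linarith
  -- equicontinuity of h
  have hec : ∀ ε' : ℝ, 0 < ε' → ∃ δ : ℝ, 0 < δ ∧ ∀ n, ∀ s ∈ Set.Icc (0:ℝ) T,
      ∀ t ∈ Set.Icc (0:ℝ) T, |t - s| ≤ δ → ‖h n t - h n s‖ ≤ ε' := by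
    have hlip : ∀ (lam : ℝ), 0 < lam → ∀ n, ∀ s ∈ Set.Icc (0:ℝ) T, ∀ t ∈ Set.Icc (0:ℝ) T,
        s ≤ t → ‖h n t - h n s‖ ≤ m * (lam * (t - s) + (2*γ + B) / (2*lam)) := by
      intro lam hlam n s hs t ht hst
      have iQ1 : IntervalIntegrable (Q n) volume 0 s := ii_sub (hQint n) h0T hs
      have iQ2 : IntervalIntegrable (Q n) volume s t := ii_sub (hQint n) hs ht
      have hdiff : h n t - h n s = ∫ x in s..t, Q n x := by
        simp only [hh_def]
        rw [← integral_add_adjacent_intervals iQ1 iQ2]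
        abel
      have hbound : (∫ x in s..t, ‖Q n x‖) ≤ ∫ x in s..t, (m * ‖u n x‖ + m * ‖uLim x‖) := by
        apply intervalIntegral.integral_mono_on hst (ii_sub (hQint n) hs ht).norm
        · exact ((ii_sub (hunorm n) hs ht).const_mul m).add
            ((ii_sub huLnorm hs ht).const_mul m)
        · intro x _
          calc ‖Q n x‖ ≤ ‖G (gLim x) (u n x)‖ + ‖G (gLim x) (uLim x)‖ := by
                simp only [hQ_def]; exact norm_sub_le _ _
            _ ≤ m * ‖u n x‖ + m * ‖uLim x‖ := by
                have h1 := (G (gLim x)).le_opNorm (u n x)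
                have h2 := (G (gLim x)).le_opNorm (uLim x)
                have h3 := hGb' (gLim x)
                have h4 : ‖G (gLim x)‖ * ‖u n x‖ ≤ m * ‖u n x‖ :=
                  mul_le_mul_of_nonneg_right h3 (norm_nonneg _)
                have h5 : ‖G (gLim x)‖ * ‖uLim x‖ ≤ m * ‖uLim x‖ :=
                  mul_le_mul_of_nonneg_right h3 (norm_nonneg _)
                linarith
      have hsplit : (∫ x in s..t, (m * ‖u n x‖ + m * ‖uLim x‖))
          = m * (∫ x in s..t, ‖u n x‖) + m * (∫ x in s..t, ‖uLim x‖) := by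
        rw [intervalIntegral.integral_add ((ii_sub (hunorm n) hs ht).const_mul m)
          ((ii_sub huLnorm hs ht).const_mul m), intervalIntegral.integral_const_mul,
          intervalIntegral.integral_const_mul]
      have hu_slice : (∫ x in s..t, ‖u n x‖) ≤ lam * (t - s) / 2 + (2*γ) / (2 * lam) :=
        l2_slice hT (hunorm n) (husq n) (hbn n) hlam hs ht hst
      have huL_slice : (∫ x in s..t, ‖uLim x‖) ≤ lam * (t - s) / 2 + B / (2 * lam) :=
        l2_slice hT huLnorm huLsq le_rfl hlam hs ht hst
      calc ‖h n t - h n s‖ = ‖∫ x in s..t, Q n x‖ := by rw [hdiff]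
        _ ≤ ∫ x in s..t, ‖Q n x‖ := intervalIntegral.norm_integral_le_integral_norm hst
        _ ≤ m * (∫ x in s..t, ‖u n x‖) + m * (∫ x in s..t, ‖uLim x‖) := by
            rw [← hsplit]; exact hbound
        _ ≤ m * (lam * (t - s) / 2 + (2*γ) / (2*lam)) + m * (lam * (t - s) / 2 + B / (2*lam)) := by
            have := mul_le_mul_of_nonneg_left hu_slice hm.le
            have := mul_le_mul_of_nonneg_left huL_slice hm.le
            linarith
        _ = m * (lam * (t - s) + (2*γ + B) / (2*lam)) := by field_simp; ring
    intro ε' hε'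
    have hpos : (0:ℝ) < 2*γ + B + 1 := by linarith
    set lam : ℝ := m * (2*γ + B + 1) / ε' with hlam_def
    have hlam : 0 < lam := by
      apply div_pos (mul_pos hm hpos) hε'
    set δ : ℝ := ε' / (2 * (m * lam + 1)) with hδ_def
    have hmlam : 0 < m * lam + 1 := by positivity
    have hδ : 0 < δ := by positivity
    have hmain : ∀ n, ∀ s ∈ Set.Icc (0:ℝ) T, ∀ t ∈ Set.Icc (0:ℝ) T, s ≤ t → t - s ≤ δ →
        ‖h n t - h n s‖ ≤ ε' := by
      intro n s hs t ht hst hd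
      have key := hlip lam hlam n s hs t ht hst
      have b1 : m * (lam * (t - s)) ≤ ε' / 2 := by
        have h1 : m * (lam * (t - s)) ≤ m * lam * δ := by
          have := mul_nonneg hm.le hlam.le
          nlinarith
        have h2 : m * lam * δ ≤ ε' / 2 := by
          rw [hδ_def, ← mul_div_assoc, div_le_div_iff₀ (by positivity) (by norm_num)]
          nlinarith [mul_pos hm hlam, mul_nonneg (mul_nonneg hm.le hlam.le) hε'.le]
        exact le_trans h1 h2
      have b2 : m * ((2*γ + B) / (2*lam)) ≤ ε' / 2 := by
        have heq : m * ((2*γ + B) / (2*lam)) = ε' * ((2*γ+B) / (2*(2*γ+B+1))) := by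
          rw [hlam_def]
          field_simp
        rw [heq]
        have hfr : (2*γ+B)/(2*(2*γ+B+1)) ≤ 1/2 := by
          rw [div_le_div_iff₀ (by positivity) (by norm_num)]
          nlinarith
        nlinarith
      have : m * (lam * (t - s) + (2*γ + B) / (2*lam))
          = m * (lam * (t - s)) + m * ((2*γ + B) / (2*lam)) := by ring
      linarith [key, this ▸ key]
    refine ⟨δ, hδ, ?_⟩
    intro n s hs t ht hd
    rcases le_total s t with hst | hst
    · exact hmain n s hs t ht hst (by rwa [abs_of_nonneg (by linarith)] at hd)
    · rw [norm_sub_rev]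
      exact hmain n t ht s hs hst (by rwa [abs_sub_comm, abs_of_nonneg (by linarith)] at hd)
  -- pointwise convergence of h
  have hpt : ∀ t ∈ Set.Icc (0:ℝ) T, Tendsto (fun n => h n t) atTop (𝓝 0) := by
    intro t ht
    set bb := EuclideanSpace.basisFun (Fin d) ℝ with hbb_def
    have hIoc_sub : Set.Ioc (0:ℝ) t ⊆ Set.Icc 0 T := fun x hx => ⟨hx.1.le, hx.2.trans ht.2⟩
    have hIocT_sub : Set.Ioc (0:ℝ) t ⊆ Set.Ioc 0 T := fun x hx => ⟨hx.1, hx.2.trans ht.2⟩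
    set v : Fin d → ℝ → EuclideanSpace ℝ (Fin r) := fun i =>
      Set.indicator (Set.Ioc 0 t)
        (fun x => ContinuousLinearMap.adjoint (G (gLim x)) (bb i)) with hv_def
    have hvcont : ∀ i, ContinuousOn
        (fun x => ContinuousLinearMap.adjoint (G (gLim x)) (bb i)) (Set.Icc 0 T) := by
      intro i
      have c1 : Continuous (fun y : EuclideanSpace ℝ (Fin d) =>
          ContinuousLinearMap.adjoint (G y) (bb i)) :=
        isBoundedBilinearMap_apply.continuous.comp
          (((ContinuousLinearMap.adjoint (𝕜 := ℝ) (E := EuclideanSpace ℝ (Fin r))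
            (F := EuclideanSpace ℝ (Fin d))).continuous.comp
            hG.continuous).prodMk continuous_const)
      exact c1.comp_continuousOn hgLimc
    have hvb : ∀ i, ∀ x : ℝ, ‖v i x‖ ≤ m := by
      intro i x
      rw [hv_def]
      refine le_trans (norm_indicator_le_norm_self _ _) ?_
      calc ‖ContinuousLinearMap.adjoint (G (gLim x)) (bb i)‖
          ≤ ‖ContinuousLinearMap.adjoint (G (gLim x))‖ * ‖bb i‖ :=
            (ContinuousLinearMap.adjoint (G (gLim x))).le_opNorm (bb i)
        _ = ‖G (gLim x)‖ * ‖bb i‖ := by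
            rw [LinearIsometryEquiv.norm_map ContinuousLinearMap.adjoint (G (gLim x))]
        _ ≤ m * 1 := by
            apply mul_le_mul (hGb' _) (le_of_eq (bb.orthonormal.1 i)) (norm_nonneg _) hm.le
        _ = m := mul_one m
    have hvmem : ∀ i, MemLp (v i) 2 (volume.restrict (Set.Icc (0:ℝ) T)) := by
      intro i
      refine MemLp.of_bound ?_ m ?_
      · rw [hv_def]
        exact ((hvcont i).aestronglyMeasurable measurableSet_Icc).indicator measurableSet_Ioc
      · filter_upwards with x using hvb i x
    have hrepr : ∀ (f : ℝ → EuclideanSpace ℝ (Fin r)),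
        IntegrableOn f (Set.Icc 0 T) →
        IntegrableOn (fun s => G (gLim s) (f s)) (Set.Icc 0 T) → ∀ i : Fin d,
        (∫ s in (0:ℝ)..T, ⟪f s, v i s⟫)
          = ⟪bb i, ∫ s in (0:ℝ)..t, G (gLim s) (f s)⟫ := by
      intro f hf hGf i
      have hGf' : Integrable (fun s => G (gLim s) (f s)) (volume.restrict (Set.Ioc 0 t)) :=
        hGf.mono_set hIoc_sub
      have e1 : ∀ s : ℝ, (⟪f s, v i s⟫ : ℝ)
          = Set.indicator (Set.Ioc 0 t) (fun x => (⟪bb i, G (gLim x) (f x)⟫ : ℝ)) s := by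
        intro s
        by_cases hs : s ∈ Set.Ioc 0 t
        · rw [hv_def]
          simp only [Set.indicator_of_mem hs]
          rw [ContinuousLinearMap.adjoint_inner_right]
          exact real_inner_comm _ _
        · rw [hv_def]
          simp [Set.indicator_of_notMem hs]
      rw [intervalIntegral.integral_of_le hT.le, intervalIntegral.integral_of_le ht.1]
      simp only [e1]
      rw [MeasureTheory.integral_indicator measurableSet_Ioc,
        Measure.restrict_restrict measurableSet_Ioc,
        Set.inter_eq_self_of_subset_left hIocT_sub]
      exact integral_inner hGf' (bb i)
    set J : EuclideanSpace ℝ (Fin d) := ∫ s in (0:ℝ)..t, G (gLim s) (uLim s) with hJ_def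
    have hconv : ∀ i : Fin d,
        Tendsto (fun n => (⟪bb i, ∫ s in (0:ℝ)..t, G (gLim s) (u n s)⟫ : ℝ)) atTop
          (𝓝 ⟪bb i, J⟫) := by
      intro i
      have hw := hweak (v i) (hvmem i)
      rw [hrepr uLim huL1 hintL2 i] at hw
      exact hw.congr (fun n => hrepr (u n) (hu1 n) (hint3 n) i)
    have hI : Tendsto (fun n => ∫ s in (0:ℝ)..t, G (gLim s) (u n s)) atTop (𝓝 J) := by
      have hsum : Tendsto (fun n => ∑ i : Fin d,
          (⟪bb i, ∫ s in (0:ℝ)..t, G (gLim s) (u n s)⟫ : ℝ) • bb i) atTop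
          (𝓝 (∑ i : Fin d, (⟪bb i, J⟫ : ℝ) • bb i)) :=
        tendsto_finset_sum _ (fun i _ => (hconv i).smul_const (bb i))
      rw [bb.sum_repr' J] at hsum
      exact hsum.congr (fun n => bb.sum_repr' _)
    have hfinal : ∀ n, h n t = (∫ s in (0:ℝ)..t, G (gLim s) (u n s)) - J := by
      intro n
      simp only [hh_def, hQ_def]
      exact intervalIntegral.integral_sub (ii_sub (hint3 n) h0T ht) (ii_sub hintL2 h0T ht)
    rw [tendsto_congr hfinal]
    have : Tendsto (fun x => (∫ (s : ℝ) in (0:ℝ)..t, (G (gLim s)) (u x s)) - J) atTop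
        (𝓝 (J - J)) := hI.sub tendsto_const_nhds
    simpa using this
  -- conclusion
  rw [Metric.tendstoUniformlyOn_iff]
  intro ε hε
  set lam0 : ℝ := 4 * (LG:ℝ) * γ + 1 with hlam0_def
  have hLG0 : (0:ℝ) ≤ (LG:ℝ) := LG.2
  have hLF0 : (0:ℝ) ≤ (LF:ℝ) := LF.2
  have hlam0 : 0 < lam0 := by positivity
  set δ0 : ℝ := (1/4) / ((LF:ℝ) + (LG:ℝ) * lam0 / 2 + 1) with hδ0_def
  have hden : 0 < (LF:ℝ) + (LG:ℝ) * lam0 / 2 + 1 := by positivity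
  have hδ0 : 0 < δ0 := by positivity
  set K : ℕ := max 1 (Nat.ceil (T / δ0)) with hK_def
  have hK : 0 < K := lt_of_lt_of_le one_pos (le_max_left _ _)
  have hKpos : (0:ℝ) < (K:ℕ) := by exact_mod_cast hK
  have hKche : T / δ0 ≤ (K:ℝ) := by
    refine le_trans (Nat.le_ceil _) ?_
    exact_mod_cast le_max_right 1 (Nat.ceil (T / δ0))
  have hδK : T / (K:ℝ) ≤ δ0 := by
    rw [div_le_iff₀ hKpos]
    have := (div_le_iff₀ hδ0).1 hKche
    linarith
  set ε0 : ℝ := ε / (2 * 2^K) with hε0_def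
  have hε0 : 0 < ε0 := by positivity
  have hh_small := unif_small hT h hpt hec hε0
  filter_upwards [hh_small] with n hn
  intro t ht
  have key : ∀ s ∈ Set.Icc (0:ℝ) T, φ n s ≤ ε0 + ∫ x in (0:ℝ)..s, a n x * φ n x := by
    intro s hs
    have h1 := hineq n s hs
    have h2 := (hn s hs).le
    linarith
  have hsm : ∀ k : ℕ, k < K →
      (∫ x in ((k:ℝ) * (T/(K:ℝ)))..(((k:ℝ)+1) * (T/(K:ℝ))), a n x) ≤ 1/2 := by
    intro k hk
    set δ : ℝ := T / (K:ℝ) with hδ_def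
    have hδpos : 0 < δ := div_pos hT hKpos
    have hk1 : (k:ℝ) + 1 ≤ (K:ℝ) := by exact_mod_cast Nat.succ_le_of_lt hk
    have hmem1 : ((k:ℝ)+1)*δ ∈ Set.Icc (0:ℝ) T := by
      constructor
      · positivity
      · calc ((k:ℝ)+1)*δ ≤ (K:ℝ)*δ := by nlinarith
          _ = T := by rw [hδ_def]; field_simp [hKpos.ne']
    have hmem0 : (k:ℝ)*δ ∈ Set.Icc (0:ℝ) T := by
      constructor
      · positivity
      · calc (k:ℝ)*δ ≤ ((k:ℝ)+1)*δ := by nlinarith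
          _ ≤ T := hmem1.2
    have hle : (k:ℝ)*δ ≤ ((k:ℝ)+1)*δ := by nlinarith
    have hsplit : (∫ x in ((k:ℝ)*δ)..(((k:ℝ)+1)*δ), a n x)
        = (LF:ℝ)*δ + (LG:ℝ) * ∫ x in ((k:ℝ)*δ)..(((k:ℝ)+1)*δ), ‖u n x‖ := by
      simp only [ha_def]
      rw [intervalIntegral.integral_add intervalIntegrable_const
        ((ii_sub (hunorm n) hmem0 hmem1).const_mul _),
        intervalIntegral.integral_const, intervalIntegral.integral_const_mul,
        smul_eq_mul]
      ring_nf
    have hus := l2_slice hT (hunorm n) (husq n) (hbn n) hlam0 hmem0 hmem1 hle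
    have hd : ((k:ℝ)+1)*δ - (k:ℝ)*δ = δ := by ring
    rw [hd] at hus
    have hδδ0 : δ ≤ δ0 := hδK
    have hb1 : (LG:ℝ) * γ / lam0 ≤ 1/4 := by
      rw [div_le_iff₀ hlam0]
      rw [hlam0_def]
      nlinarith
    have hb2 : ((LF:ℝ) + (LG:ℝ) * lam0 / 2) * δ0 ≤ 1/4 := by
      rw [hδ0_def]
      rw [div_eq_mul_inv (1/4 : ℝ)]
      rw [← mul_assoc]
      have h1 : ((LF:ℝ) + (LG:ℝ) * lam0 / 2) ≤ ((LF:ℝ) + (LG:ℝ) * lam0 / 2 + 1) := by linarith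
      calc ((LF:ℝ) + (LG:ℝ) * lam0 / 2) * (1/4) * ((LF:ℝ) + (LG:ℝ) * lam0 / 2 + 1)⁻¹
          ≤ ((LF:ℝ) + (LG:ℝ) * lam0 / 2 + 1) * (1/4) * ((LF:ℝ) + (LG:ℝ) * lam0 / 2 + 1)⁻¹ := by
            apply mul_le_mul_of_nonneg_right _ (inv_nonneg.2 hden.le)
            linarith
        _ = 1/4 := by field_simp
    have hLGmul : (LG:ℝ) * (lam0 * δ / 2 + 2 * γ / (2 * lam0))
        ≤ (LG:ℝ) * lam0 * δ / 2 + (LG:ℝ) * γ / lam0 := by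
      have : 2 * γ / (2 * lam0) = γ / lam0 := by
        field_simp
      rw [this]
      rw [mul_add]
      apply add_le_add
      · apply le_of_eq; ring
      · apply le_of_eq; rw [mul_div_assoc]
    calc (∫ x in ((k:ℝ)*δ)..(((k:ℝ)+1)*δ), a n x)
        = (LF:ℝ)*δ + (LG:ℝ) * ∫ x in ((k:ℝ)*δ)..(((k:ℝ)+1)*δ), ‖u n x‖ := hsplit
      _ ≤ (LF:ℝ)*δ + (LG:ℝ) * (lam0 * δ / 2 + 2*γ / (2*lam0)) := by
          have := mul_le_mul_of_nonneg_left hus hLG0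
          linarith
      _ ≤ (LF:ℝ)*δ + ((LG:ℝ) * lam0 * δ / 2 + (LG:ℝ) * γ / lam0) := by linarith
      _ = ((LF:ℝ) + (LG:ℝ) * lam0 / 2) * δ + (LG:ℝ) * γ / lam0 := by ring
      _ ≤ ((LF:ℝ) + (LG:ℝ) * lam0 / 2) * δ0 + 1/4 := by
          have hnn : (0:ℝ) ≤ (LF:ℝ) + (LG:ℝ) * lam0 / 2 := by positivity
          have := mul_le_mul_of_nonneg_left hδδ0 hnn
          linarith
      _ ≤ 1/4 + 1/4 := by linarith
      _ = 1/2 := by norm_num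
  have gr := gronwall_discrete hT (ha_int n) (ha_nn n) (haφ_int n)
    (fun s => norm_nonneg _) hε0.le key hK hsm t ht
  have h2K : (0:ℝ) < 2^K := by positivity
  have hhalf : (2:ℝ)^K * ε0 = ε/2 := by
    rw [hε0_def]
    field_simp
  have hdist : dist (gLim t) (g n t) = φ n t := by
    simp only [hφ_def]
    rw [dist_eq_norm, norm_sub_rev]
  rw [hdist]
  calc φ n t ≤ 2^K * ε0 := gr
    _ = ε/2 := hhalf
    _ < ε := by linarith
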